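/- arXiv:2406.09107 — 2 statements merged into one kernel-verified Lean document; each statement's English description precedes it below -/
import Mathlib

section
/- The sequence (√n)_{n≥1} is equidistributed modulo 1. -/
set_option maxHeartbeats 1000000

open scoped Classical

private lemma blockEquiv (a b : ℝ) (ha : 0 ≤ a) (hab : a ≤ b) (hb : b ≤ 1) (k m : ℕ) (hk : 1 ≤ k)
    (h1 : k^2 ≤ m) (h2 : m < (k+1)^2) :
    Int.fract (Real.sqrt m) ∈ Set.Icc a b ↔
      (((k:ℝ)+a)^2 ≤ m ∧ (m:ℝ) ≤ ((k:ℝ)+b)^2) := by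
  have hm0 : (0:ℝ) ≤ m := Nat.cast_nonneg m
  have h1' : ((k:ℝ))^2 ≤ m := by exact_mod_cast h1
  have h2' : ((m:ℝ)) < ((k:ℝ)+1)^2 := by exact_mod_cast h2
  have hks : (k:ℝ) ≤ Real.sqrt m := (Real.le_sqrt (by positivity) hm0).mpr h1'
  have hlt : Real.sqrt m < (k:ℝ)+1 := (Real.sqrt_lt' (by positivity)).mpr h2'
  have hfloor : ⌊Real.sqrt m⌋ = (k:ℤ) := by
    rw [Int.floor_eq_iff]
    constructor
    · exact_mod_cast hks
    · push_cast; exact hlt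
  have hfract : Int.fract (Real.sqrt m) = Real.sqrt m - k := by
    rw [Int.fract, hfloor]; push_cast; ring
  have hk0 : (0:ℝ) ≤ k := Nat.cast_nonneg k
  have hb0 : (0:ℝ) ≤ b := le_trans ha hab
  rw [hfract]
  simp only [Set.mem_Icc]
  constructor
  · rintro ⟨hA, hB⟩
    refine ⟨(Real.le_sqrt (by positivity) hm0).mp (by linarith), ?_⟩
    exact (Real.sqrt_le_left (by linarith)).mp (by linarith)
  · rintro ⟨hA, hB⟩
    have := (Real.le_sqrt (by positivity) hm0).mpr hA
    have := (Real.sqrt_le_left (by linarith)).mpr hB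
    constructor <;> linarith

private lemma blockCard (a b : ℝ) (ha : 0 ≤ a) (hab : a ≤ b) (hb : b ≤ 1) (k : ℕ) (hk : 1 ≤ k) :
    2*(k:ℝ)*(b-a) - 1 ≤
      (((Finset.Ico (k^2) ((k+1)^2)).filter
        (fun m : ℕ => Int.fract (Real.sqrt m) ∈ Set.Icc a b)).card : ℝ) ∧
    (((Finset.Ico (k^2) ((k+1)^2)).filter
        (fun m : ℕ => Int.fract (Real.sqrt m) ∈ Set.Icc a b)).card : ℝ) ≤
      2*(k:ℝ)*(b-a) + 2 := by
  classical
  set x : ℝ := ((k:ℝ)+a)^2 with hxdef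
  set y : ℝ := ((k:ℝ)+b)^2 with hydef
  have hk0 : (0:ℝ) ≤ k := Nat.cast_nonneg k
  have hb0 : (0:ℝ) ≤ b := le_trans ha hab
  have hx0 : 0 ≤ x := by positivity
  have hy0 : 0 ≤ y := by positivity
  have hxy : x ≤ y := by nlinarith
  have hyx : y - x = 2*(k:ℝ)*(b-a) + (b^2-a^2) := by rw [hxdef, hydef]; ring
  have hba2 : 0 ≤ b^2 - a^2 := by nlinarith
  have hba2' : b^2 - a^2 ≤ 1 := by nlinarith
  have hylt : y ≤ ((k:ℝ)+1)^2 := by nlinarith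
  set c := ⌈x⌉₊ with hcdef
  set S := (Finset.Ico (k^2) ((k+1)^2)).filter
        (fun m : ℕ => Int.fract (Real.sqrt m) ∈ Set.Icc a b) with hSdef
  have hcx : x ≤ (c:ℝ) := Nat.le_ceil x
  have hcx' : (c:ℝ) < x + 1 := Nat.ceil_lt_add_one hx0
  constructor
  · -- lower bound
    set d := min ⌊y⌋₊ ((k+1)^2 - 1) with hddef
    have hsub : Finset.Icc c d ⊆ S := by
      intro m hm
      simp only [Finset.mem_Icc] at hm
      obtain ⟨hm1, hm2⟩ := hm
      have hmx : x ≤ (m:ℝ) := le_trans hcx (by exact_mod_cast hm1)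
      have hmfy : m ≤ ⌊y⌋₊ := le_trans hm2 (min_le_left _ _)
      have hmy : (m:ℝ) ≤ y := le_trans (by exact_mod_cast hmfy) (Nat.floor_le hy0)
      have hmblock1 : k^2 ≤ m := by
        have h : ((k:ℝ))^2 ≤ (m:ℝ) := by nlinarith
        exact_mod_cast h
      have hmblock2 : m < (k+1)^2 := by
        have : m ≤ (k+1)^2 - 1 := le_trans hm2 (min_le_right _ _)
        have h1 : 1 ≤ (k+1)^2 := Nat.one_le_iff_ne_zero.mpr (by positivity)
        omega
      rw [hSdef, Finset.mem_filter, Finset.mem_Ico]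
      exact ⟨⟨hmblock1, hmblock2⟩,
        (blockEquiv a b ha hab hb k m hk hmblock1 hmblock2).mpr ⟨hmx, hmy⟩⟩
    have hcard : (Finset.Icc c d).card ≤ S.card := Finset.card_le_card hsub
    have hdy : y - 1 ≤ (d:ℝ) := by
      have h1 : y - 1 ≤ (⌊y⌋₊ : ℝ) := by
        have := Nat.lt_floor_add_one y; linarith
      have h2 : y - 1 ≤ (((k+1)^2 - 1 : ℕ) : ℝ) := by
        have h3 : 1 ≤ (k+1)^2 := Nat.one_le_iff_ne_zero.mpr (by positivity)
        have : (((k+1)^2 - 1 : ℕ) : ℝ) = ((k:ℝ)+1)^2 - 1 := by push_cast [h3]; ring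
        rw [this]; linarith
      rw [hddef]
      rcases min_cases (⌊y⌋₊) ((k+1)^2 - 1) with ⟨heq, _⟩ | ⟨heq, _⟩ <;> rw [heq]
      · exact h1
      · exact h2
    rcases le_or_gt c (d+1) with hcd | hcd
    · have hcast : ((Finset.Icc c d).card : ℝ) = (d:ℝ) + 1 - c := by
        rw [Nat.card_Icc]
        rw [Nat.cast_sub hcd]
        push_cast; ring
      have hlow : 2*(k:ℝ)*(b-a) - 1 ≤ ((Finset.Icc c d).card : ℝ) := by
        rw [hcast]; nlinarith
      have : ((Finset.Icc c d).card : ℝ) ≤ (S.card : ℝ) := by exact_mod_cast hcard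
      linarith
    · have hdc : (d:ℝ) + 1 < (c:ℝ) := by exact_mod_cast hcd
      have hS0 : (0:ℝ) ≤ (S.card : ℝ) := Nat.cast_nonneg _
      nlinarith
  · -- upper bound
    have hsub : S ⊆ Finset.Icc c ⌊y⌋₊ := by
      intro m hm
      rw [hSdef, Finset.mem_filter, Finset.mem_Ico] at hm
      obtain ⟨⟨h1, h2⟩, h3⟩ := hm
      obtain ⟨hmx, hmy⟩ := (blockEquiv a b ha hab hb k m hk h1 h2).mp h3
      simp only [Finset.mem_Icc]
      exact ⟨Nat.ceil_le.mpr hmx, Nat.le_floor hmy⟩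
    have hcard : S.card ≤ (Finset.Icc c ⌊y⌋₊).card := Finset.card_le_card hsub
    have hfy : (⌊y⌋₊ : ℝ) ≤ y := Nat.floor_le hy0
    rcases le_or_gt c (⌊y⌋₊+1) with hcd | hcd
    · have hcast : ((Finset.Icc c ⌊y⌋₊).card : ℝ) = (⌊y⌋₊:ℝ) + 1 - c := by
        rw [Nat.card_Icc, Nat.cast_sub hcd]
        push_cast; ring
      have h1 : (S.card : ℝ) ≤ ((Finset.Icc c ⌊y⌋₊).card : ℝ) := by exact_mod_cast hcard
      have h2 : (S.card : ℝ) ≤ (⌊y⌋₊:ℝ) + 1 - c := le_of_le_of_eq h1 hcast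
      linarith
    · have h0 : (Finset.Icc c ⌊y⌋₊).card = 0 := by rw [Nat.card_Icc]; omega
      have hS0 : S.card = 0 := by omega
      rw [hS0]; push_cast; nlinarith

private lemma sumCard (a b : ℝ) (ha : 0 ≤ a) (hab : a ≤ b) (hb : b ≤ 1) (K : ℕ) (hK : 1 ≤ K) :
    (b-a)*K*((K:ℝ)-1) - K ≤
      (((Finset.Ico 1 (K^2)).filter
        (fun m : ℕ => Int.fract (Real.sqrt m) ∈ Set.Icc a b)).card : ℝ) ∧
    (((Finset.Ico 1 (K^2)).filter
        (fun m : ℕ => Int.fract (Real.sqrt m) ∈ Set.Icc a b)).card : ℝ) ≤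
      (b-a)*K*((K:ℝ)-1) + 2*K := by
  classical
  induction K, hK using Nat.le_induction with
  | base =>
    simp only [one_pow, Finset.Ico_self, Finset.filter_empty, Finset.card_empty]
    push_cast
    constructor <;> nlinarith
  | succ K hK ih =>
    have hsq : 1 ≤ K^2 := Nat.one_le_iff_ne_zero.mpr (by positivity)
    have hsq2 : K^2 ≤ (K+1)^2 := Nat.pow_le_pow_left (by omega) 2
    have hunion : Finset.Ico 1 (K^2) ∪ Finset.Ico (K^2) ((K+1)^2) = Finset.Ico 1 ((K+1)^2) :=
      Finset.Ico_union_Ico_eq_Ico hsq hsq2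
    have hdisj : Disjoint (Finset.Ico 1 (K^2)) (Finset.Ico (K^2) ((K+1)^2)) :=
      Finset.Ico_disjoint_Ico_consecutive 1 (K^2) ((K+1)^2)
    have hcards : ((Finset.Ico 1 ((K+1)^2)).filter
          (fun m : ℕ => Int.fract (Real.sqrt m) ∈ Set.Icc a b)).card
        = ((Finset.Ico 1 (K^2)).filter
          (fun m : ℕ => Int.fract (Real.sqrt m) ∈ Set.Icc a b)).card
        + ((Finset.Ico (K^2) ((K+1)^2)).filter
          (fun m : ℕ => Int.fract (Real.sqrt m) ∈ Set.Icc a b)).card := by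
      rw [← hunion, Finset.filter_union]
      exact Finset.card_union_of_disjoint (Finset.disjoint_filter_filter hdisj)
    obtain ⟨hl1, hu1⟩ := ih
    obtain ⟨hl2, hu2⟩ := blockCard a b ha hab hb K hK
    have hK0 : (1:ℝ) ≤ K := by exact_mod_cast hK
    rw [hcards]
    push_cast
    constructor <;> nlinarith

/-- The sequence `(√n)ₙ` is equidistributed modulo 1: for every interval `[a,b] ⊆ [0,1]`,
the proportion of `n ≤ N` with fractional part of `√n` in `[a,b]` tends to `b - a`. -/
theorem stmt5 (a b : ℝ) (ha : 0 ≤ a) (hab : a ≤ b) (hb : b ≤ 1) :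
    Filter.Tendsto (fun N : ℕ =>
      (((Finset.range N).filter
          (fun n => Int.fract (Real.sqrt (n + 1)) ∈ Set.Icc a b)).card : ℝ) / N)
      Filter.atTop (nhds (b - a)) := by
  classical
  -- step 1: the statement's Finset ℝ count equals a Finset ℕ count
  have hcast : ∀ N : ℕ, ((Finset.range N).filter
          (fun n => Int.fract (Real.sqrt (n + 1)) ∈ Set.Icc a b)).card
      = ((Finset.range N).filter
          (fun n : ℕ => Int.fract (Real.sqrt ((n:ℝ) + 1)) ∈ Set.Icc a b)).card := by
    intro N
    have hbind : (do let a ← Finset.range N; pure (↑a : ℝ))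
        = (Finset.range N).image (fun n : ℕ => (n : ℝ)) := by
      ext x; simp [Finset.bind_def, Finset.mem_biUnion]
    rw [show ((Finset.range N).filter
            (fun n => Int.fract (Real.sqrt (n + 1)) ∈ Set.Icc a b))
        = ((do let a ← Finset.range N; pure (↑a : ℝ)).filter
            (fun x : ℝ => Int.fract (Real.sqrt (x + 1)) ∈ Set.Icc a b)) from rfl, hbind]
    rw [Finset.filter_image]
    exact Finset.card_image_of_injective _ Nat.cast_injective
  -- step 2: reindex n ↦ n+1 to count over Ico 1 (N+1)
  have hfg : ∀ N : ℕ, ((Finset.range N).filter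
      (fun n : ℕ => Int.fract (Real.sqrt ((n:ℝ) + 1)) ∈ Set.Icc a b)).card
      = ((Finset.Ico 1 (N+1)).filter
        (fun m : ℕ => Int.fract (Real.sqrt m) ∈ Set.Icc a b)).card := by
    intro N
    refine Finset.card_bij' (fun n _ => n + 1) (fun m _ => m - 1) ?_ ?_ ?_ ?_
    · intro n hn
      simp only [Finset.mem_filter, Finset.mem_range] at hn
      simp only [Finset.mem_filter, Finset.mem_Ico]
      refine ⟨⟨by omega, by omega⟩, ?_⟩
      have h : ((n + 1 : ℕ) : ℝ) = (n : ℝ) + 1 := by push_cast; ring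
      rw [h]
      exact hn.2
    · intro m hm
      simp only [Finset.mem_filter, Finset.mem_Ico] at hm
      simp only [Finset.mem_filter, Finset.mem_range]
      obtain ⟨⟨hm1, hm2⟩, hm3⟩ := hm
      refine ⟨by omega, ?_⟩
      have h : ((m - 1 : ℕ) : ℝ) + 1 = (m : ℝ) := by push_cast [hm1]; ring
      rw [h]
      exact hm3
    · intro n _; omega
    · intro m hm
      simp only [Finset.mem_filter, Finset.mem_Ico] at hm
      omega
  -- key bounds for N ≥ 1
  have key : ∀ N : ℕ, 1 ≤ N →
      (b - a) - 5 / Real.sqrt N ≤ (((Finset.range N).filter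
          (fun n => Int.fract (Real.sqrt (n + 1)) ∈ Set.Icc a b)).card : ℝ) / N ∧
      (((Finset.range N).filter
          (fun n => Int.fract (Real.sqrt (n + 1)) ∈ Set.Icc a b)).card : ℝ) / N ≤
        (b - a) + 5 / Real.sqrt N := by
    intro N hN
    set K := Nat.sqrt N with hKdef
    have hK1 : 1 ≤ K := Nat.sqrt_pos.mpr hN
    have hKle : K^2 ≤ N := Nat.sqrt_le' N
    have hKlt : N < (K+1)^2 := Nat.lt_succ_sqrt' N
    have hsub1 : Finset.Ico 1 (K^2) ⊆ Finset.Ico 1 (N+1) :=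
      Finset.Ico_subset_Ico le_rfl (by omega)
    have hsub2 : Finset.Ico 1 (N+1) ⊆ Finset.Ico 1 ((K+1)^2) :=
      Finset.Ico_subset_Ico le_rfl (by omega)
    have h1 : ((Finset.Ico 1 (K^2)).filter
        (fun m : ℕ => Int.fract (Real.sqrt m) ∈ Set.Icc a b)).card
        ≤ ((Finset.Ico 1 (N+1)).filter
        (fun m : ℕ => Int.fract (Real.sqrt m) ∈ Set.Icc a b)).card :=
      Finset.card_le_card (Finset.filter_subset_filter _ hsub1)
    have h2 : ((Finset.Ico 1 (N+1)).filter
        (fun m : ℕ => Int.fract (Real.sqrt m) ∈ Set.Icc a b)).card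
        ≤ ((Finset.Ico 1 ((K+1)^2)).filter
        (fun m : ℕ => Int.fract (Real.sqrt m) ∈ Set.Icc a b)).card :=
      Finset.card_le_card (Finset.filter_subset_filter _ hsub2)
    obtain ⟨hl, _⟩ := sumCard a b ha hab hb K hK1
    obtain ⟨_, hu⟩ := sumCard a b ha hab hb (K+1) (by omega)
    rw [hcast N, hfg N]
    have h1' : (((Finset.Ico 1 (K^2)).filter
        (fun m : ℕ => Int.fract (Real.sqrt m) ∈ Set.Icc a b)).card : ℝ)
        ≤ (((Finset.Ico 1 (N+1)).filter
        (fun m : ℕ => Int.fract (Real.sqrt m) ∈ Set.Icc a b)).card : ℝ) := Nat.cast_le.mpr h1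
    have h2' : (((Finset.Ico 1 (N+1)).filter
        (fun m : ℕ => Int.fract (Real.sqrt m) ∈ Set.Icc a b)).card : ℝ)
        ≤ (((Finset.Ico 1 ((K+1)^2)).filter
        (fun m : ℕ => Int.fract (Real.sqrt m) ∈ Set.Icc a b)).card : ℝ) := Nat.cast_le.mpr h2
    push_cast at hl hu
    -- real variables
    have hr1 : (1:ℝ) ≤ K := by exact_mod_cast hK1
    have hrle : ((K:ℝ))^2 ≤ N := by exact_mod_cast hKle
    have hrlt : (N:ℝ) < ((K:ℝ)+1)^2 := by exact_mod_cast hKlt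
    have hn1 : (1:ℝ) ≤ N := by exact_mod_cast hN
    have hn0 : (0:ℝ) < N := by linarith
    have hsr2 : (Real.sqrt N)^2 = N := Real.sq_sqrt (le_of_lt hn0)
    have hsr0 : 0 < Real.sqrt N := Real.sqrt_pos.mpr hn0
    have hrsr : (K:ℝ) ≤ Real.sqrt N :=
      (Real.le_sqrt (by positivity) (le_of_lt hn0)).mpr hrle
    have hba0 : 0 ≤ b - a := by linarith
    have hba1 : b - a ≤ 1 := by linarith
    set F : ℝ := (((Finset.Ico 1 (N+1)).filter
        (fun m : ℕ => Int.fract (Real.sqrt m) ∈ Set.Icc a b)).card : ℝ) with hFdef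
    have hFl : (b-a)*(N:ℝ) - 5*Real.sqrt N ≤ F := by nlinarith
    have hFu : F ≤ (b-a)*(N:ℝ) + 5*Real.sqrt N := by nlinarith
    have h5 : 5 / Real.sqrt N * (N:ℝ) = 5 * Real.sqrt N := by
      field_simp; nlinarith [hsr2]
    constructor
    · rw [le_div_iff₀ hn0]
      nlinarith
    · rw [div_le_iff₀ hn0]
      nlinarith
  -- squeeze
  have hsqrtTop : Filter.Tendsto (fun N : ℕ => Real.sqrt N) Filter.atTop Filter.atTop := by
    rw [Filter.tendsto_atTop_atTop]
    intro C
    refine ⟨(⌈max C 0⌉₊)^2, fun n hn => ?_⟩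
    have h1 : ((⌈max C 0⌉₊^2 : ℕ) : ℝ) ≤ (n:ℝ) := by exact_mod_cast hn
    have h2 : Real.sqrt ((⌈max C 0⌉₊^2 : ℕ) : ℝ) ≤ Real.sqrt n := Real.sqrt_le_sqrt h1
    have h3 : Real.sqrt ((⌈max C 0⌉₊^2 : ℕ) : ℝ) = (⌈max C 0⌉₊ : ℝ) := by
      push_cast
      exact Real.sqrt_sq (Nat.cast_nonneg _)
    have h4 : C ≤ (⌈max C 0⌉₊ : ℝ) := le_trans (le_max_left C 0) (Nat.le_ceil _)
    rw [h3] at h2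
    linarith
  have h0 : Filter.Tendsto (fun N : ℕ => 5 / Real.sqrt N) Filter.atTop (nhds 0) :=
    Filter.Tendsto.div_atTop tendsto_const_nhds hsqrtTop
  have hlo : Filter.Tendsto (fun N : ℕ => (b - a) - 5 / Real.sqrt N)
      Filter.atTop (nhds (b-a)) := by
    have := Filter.Tendsto.sub
      (tendsto_const_nhds (x := b - a) (f := (Filter.atTop : Filter ℕ))) h0
    simpa using this
  have hhi : Filter.Tendsto (fun N : ℕ => (b - a) + 5 / Real.sqrt N)
      Filter.atTop (nhds (b-a)) := by
    have := Filter.Tendsto.add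
      (tendsto_const_nhds (x := b - a) (f := (Filter.atTop : Filter ℕ))) h0
    simpa using this
  refine tendsto_of_tendsto_of_tendsto_of_le_of_le' hlo hhi ?_ ?_
  · filter_upwards [Filter.eventually_ge_atTop 1] with N hN
    exact (key N hN).1
  · filter_upwards [Filter.eventually_ge_atTop 1] with N hN
    exact (key N hN).2
end

section
/- The rotated process Θ·k(π/2) does not have the same distribution as Θ; in particular, Θ is not invariant under the full SL(2,ℝ) action on ℝ². Specifically: almost surely, the restriction of Θ to the open right half plane coincides with the restriction of a single affine lattice, whereas the restriction of Θ·((0,-1),(1,0)) to the open right half plane almost surely does not coincide with the restriction of any single affine lattice. -/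
open MeasureTheory
open scoped ENNReal

instance : MeasurableSpace (Matrix (Fin 2) (Fin 2) ℝ) := by
  unfold Matrix; infer_instance

/-- Multiplication in `ASL(2,ℝ)`: `(M,v)(M',v') = (MM', vM' + v')`. -/
noncomputable def aslMul (g h : Matrix (Fin 2) (Fin 2) ℝ × (Fin 2 → ℝ)) :
    Matrix (Fin 2) (Fin 2) ℝ × (Fin 2 → ℝ) :=
  (g.1 * h.1, Matrix.vecMul g.2 h.1 + h.2)

/-- Action of `(M,v) ∈ ASL(2,ℝ)` on a row vector: `x ↦ xM + v`. -/
noncomputable def aslAct (g : Matrix (Fin 2) (Fin 2) ℝ × (Fin 2 → ℝ)) (x : Fin 2 → ℝ) :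
    Fin 2 → ℝ :=
  Matrix.vecMul x g.1 + g.2

/-- Membership in `Λ = Γ_{2,0}(4) ⋉ ℤ²`. -/
def inLambda (γ : Matrix (Fin 2) (Fin 2) ℝ × (Fin 2 → ℝ)) : Prop :=
  (∃ γ₀ : Matrix (Fin 2) (Fin 2) ℤ, γ.1 = γ₀.map (Int.cast : ℤ → ℝ) ∧ γ₀.det = 1 ∧
    (γ₀.map (Int.cast : ℤ → ZMod 4) = 1 ∨ γ₀.map (Int.cast : ℤ → ZMod 4) = !![1, 2; 0, 1]))
    ∧ ∃ m : Fin 2 → ℤ, γ.2 = fun i => (m i : ℝ)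

/-- The shift vector `w = (1/2, -1/4)`. -/
noncomputable def wvec : Fin 2 → ℝ := ![1/2, -1/4]

/-- The right and left closed half planes. -/
def Hplus : Set (Fin 2 → ℝ) := {x | 0 ≤ x 0}
def Hminus : Set (Fin 2 → ℝ) := {x | x 0 ≤ 0}

/-- The open right half plane. -/
def HplusOpen : Set (Fin 2 → ℝ) := {x | 0 < x 0}

/-- The point set `Θ(g) = (ℤ²g ∩ H₊) ∪ (-([ℤ²+(1/2,-1/4)]g) ∩ H₋)`. -/
noncomputable def ThetaSet (g : Matrix (Fin 2) (Fin 2) ℝ × (Fin 2 → ℝ)) :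
    Set (Fin 2 → ℝ) :=
  ({x | ∃ m : Fin 2 → ℤ, x = aslAct g fun i => (m i : ℝ)} ∩ Hplus) ∪
  ({x | ∃ m : Fin 2 → ℤ, x = -(aslAct g ((fun i => (m i : ℝ)) + wvec))} ∩ Hminus)

/-- The affine lattice `ℤ²M + v`. -/
def affLattice (M : Matrix (Fin 2) (Fin 2) ℝ) (v : Fin 2 → ℝ) : Set (Fin 2 → ℝ) :=
  {x | ∃ m : Fin 2 → ℤ, x = Matrix.vecMul (fun i => (m i : ℝ)) M + v}

/-- `S` looks like a single affine lattice on the open right half plane. -/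
def IsAffLatticeOnRight (S : Set (Fin 2 → ℝ)) : Prop :=
  ∃ M v, M.det ≠ 0 ∧ S ∩ HplusOpen = affLattice M v ∩ HplusOpen

/-- The rotation `k(π/2) = ((0,-1),(1,0))` applied to a point set on the right. -/
noncomputable def rotSet (S : Set (Fin 2 → ℝ)) : Set (Fin 2 → ℝ) :=
  (fun x => Matrix.vecMul x (!![0, -1; 1, 0] : Matrix (Fin 2) (Fin 2) ℝ)) '' S

lemma affLattice_near (M : Matrix (Fin 2) (Fin 2) ℝ) (hM : M.det ≠ 0) (v z : Fin 2 → ℝ) :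
    ∃ p ∈ affLattice M v, ∀ j, |p j - z j| ≤ |M 0 0| + |M 0 1| + |M 1 0| + |M 1 1| := by
  set s : Fin 2 → ℝ := Matrix.vecMul (z - v) M⁻¹ with hs
  set m : Fin 2 → ℤ := fun i => ⌊s i⌋ with hm
  refine ⟨Matrix.vecMul (fun i => (m i : ℝ)) M + v, ⟨m, rfl⟩, ?_⟩
  have hsM : Matrix.vecMul s M = z - v := by
    rw [hs, Matrix.vecMul_vecMul, Matrix.nonsing_inv_mul M (Ne.isUnit hM), Matrix.vecMul_one]
  intro j
  have hj := congrFun hsM j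
  simp only [Matrix.vecMul, dotProduct, Fin.sum_univ_two, Pi.sub_apply] at hj
  have key : (Matrix.vecMul (fun i => (m i : ℝ)) M + v) j - z j
      = ((m 0 : ℝ) - s 0) * M 0 j + ((m 1 : ℝ) - s 1) * M 1 j := by
    simp only [Matrix.vecMul, dotProduct, Fin.sum_univ_two, Pi.add_apply]
    linarith
  have hb : ∀ i : Fin 2, |(m i : ℝ) - s i| ≤ 1 := by
    intro i
    rw [abs_le]
    constructor
    · have := Int.lt_floor_add_one (s i)
      simp only [hm]; push_cast; linarith
    · have := Int.floor_le (s i)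
      simp only [hm]; push_cast; linarith
  calc |(Matrix.vecMul (fun i => (m i : ℝ)) M + v) j - z j|
      ≤ |((m 0 : ℝ) - s 0) * M 0 j| + |((m 1 : ℝ) - s 1) * M 1 j| := by
        rw [key]; exact abs_add_le _ _
    _ ≤ |M 0 j| + |M 1 j| := by
        rw [abs_mul, abs_mul]
        have h0 := hb 0; have h1 := hb 1
        have := abs_nonneg (M 0 j); have := abs_nonneg (M 1 j)
        nlinarith
    _ ≤ |M 0 0| + |M 0 1| + |M 1 0| + |M 1 1| := by
        have a00 := abs_nonneg (M 0 0); have a01 := abs_nonneg (M 0 1)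
        have a10 := abs_nonneg (M 1 0); have a11 := abs_nonneg (M 1 1)
        fin_cases j <;> simp <;> linarith

lemma affLattice_point (M : Matrix (Fin 2) (Fin 2) ℝ) (hM : M.det ≠ 0) (v : Fin 2 → ℝ)
    (C : ℝ) (σ : ℝ) (hσ : σ = 1 ∨ σ = -1) :
    ∃ p ∈ affLattice M v, C < p 0 ∧ C < σ * p 1 := by
  set RM := |M 0 0| + |M 0 1| + |M 1 0| + |M 1 1| with hRM
  obtain ⟨p, hp, hb⟩ := affLattice_near M hM v ![C + RM + 1, σ * (C + RM + 1)]
  refine ⟨p, hp, ?_, ?_⟩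
  · have := hb 0
    simp only [Matrix.cons_val_zero] at this
    have := abs_le.mp this
    linarith
  · have h1 := hb 1
    simp only [Matrix.cons_val_one, Matrix.head_cons, Matrix.cons_val_zero] at h1
    have h2 := abs_le.mp h1
    rcases hσ with h | h <;> rw [h] at h2 ⊢ <;> nlinarith [h2.1, h2.2]

lemma lattice_diff (M : Matrix (Fin 2) (Fin 2) ℝ) (v : Fin 2 → ℝ)
    (M₀ : Matrix (Fin 2) (Fin 2) ℝ) (a b : Fin 2 → ℝ) (hM₀ : M₀.det ≠ 0)
    (h : affLattice M v ∩ HplusOpen =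
      ((affLattice M₀ a ∩ {y | y 1 ≤ 0}) ∪ (affLattice M₀ b ∩ {y | 0 ≤ y 1})) ∩ HplusOpen) :
    ∃ m : Fin 2 → ℤ, b - a = Matrix.vecMul (fun i => (m i : ℝ)) M₀ := by
  -- a deep point of B in the open upper-right quadrant
  obtain ⟨c, hcB, hc0, hc1⟩ := affLattice_point M₀ hM₀ b 0 1 (Or.inl rfl)
  rw [one_mul] at hc1
  -- a deep point of A in the open lower-right quadrant
  obtain ⟨d, hdA, hd0, hd1⟩ := affLattice_point M₀ hM₀ a 0 (-1) (Or.inr rfl)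
  have hd1' : d 1 < 0 := by nlinarith
  -- both lie in L
  have hcL : c ∈ affLattice M v := by
    have : c ∈ affLattice M v ∩ HplusOpen := by
      rw [h]; exact ⟨Or.inr ⟨hcB, le_of_lt hc1⟩, hc0⟩
    exact this.1
  have hdL : d ∈ affLattice M v := by
    have : d ∈ affLattice M v ∩ HplusOpen := by
      rw [h]; exact ⟨Or.inl ⟨hdA, le_of_lt hd1'⟩, hd0⟩
    exact this.1
  -- u := c - d lies in the period lattice of L
  obtain ⟨pc, hpc⟩ := hcL
  obtain ⟨qd, hqd⟩ := hdL
  set u : Fin 2 → ℝ := c - d with hu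
  -- a deep point e of B with e, e + u in the open right half plane, upper part
  obtain ⟨e, heB, he0, he1⟩ := affLattice_point M₀ hM₀ b (|u 0| + |u 1| + 1) 1 (Or.inl rfl)
  rw [one_mul] at he1
  have habs0 := abs_nonneg (u 0); have habs1 := abs_nonneg (u 1)
  have he0' : (0:ℝ) < e 0 := by linarith
  have he1' : (0:ℝ) < e 1 := by linarith
  have heL : e ∈ affLattice M v := by
    have : e ∈ affLattice M v ∩ HplusOpen := by
      rw [h]; exact ⟨Or.inr ⟨heB, le_of_lt he1'⟩, he0'⟩
    exact this.1
  obtain ⟨re, hre⟩ := heL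
  -- e + u ∈ L
  have heuL : e + u ∈ affLattice M v := by
    refine ⟨fun i => re i + pc i - qd i, ?_⟩
    have : (fun i => ((re i + pc i - qd i : ℤ) : ℝ))
        = (fun i => (re i : ℝ)) + (fun i => (pc i : ℝ)) - (fun i => (qd i : ℝ)) := by
      funext i; push_cast; simp
    rw [this, Matrix.sub_vecMul, Matrix.add_vecMul, hu, hre, hpc, hqd]
    funext j; simp; ring
  -- e + u is in the open upper-right quadrant
  have heu0 : (0:ℝ) < (e + u) 0 := by
    have := abs_le.mp (le_refl |u 0|); simp only [Pi.add_apply]; cases abs_cases (u 0) with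
    | inl hh => linarith [hh.1]
    | inr hh => linarith [hh.1]
  have heu1 : (0:ℝ) < (e + u) 1 := by
    simp only [Pi.add_apply]; cases abs_cases (u 1) with
    | inl hh => linarith [hh.1]
    | inr hh => linarith [hh.1]
  -- hence e + u ∈ B
  have heuB : e + u ∈ affLattice M₀ b := by
    have hmem : e + u ∈ affLattice M v ∩ HplusOpen := ⟨heuL, heu0⟩
    rw [h] at hmem
    rcases hmem.1 with ⟨_, hle⟩ | ⟨hB, _⟩
    · exact absurd heu1 (not_lt.mpr hle)
    · exact hB
  -- conclude
  obtain ⟨r1, hr1⟩ := heB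
  obtain ⟨r2, hr2⟩ := heuB
  obtain ⟨r3, hr3⟩ := hcB
  obtain ⟨r4, hr4⟩ := hdA
  refine ⟨fun i => r2 i - r1 i - r3 i + r4 i, ?_⟩
  have hcast : (fun i => ((r2 i - r1 i - r3 i + r4 i : ℤ) : ℝ))
      = (fun i => (r2 i : ℝ)) - (fun i => (r1 i : ℝ)) - (fun i => (r3 i : ℝ))
        + (fun i => (r4 i : ℝ)) := by
    funext i; push_cast; simp
  rw [hcast, Matrix.add_vecMul, Matrix.sub_vecMul, Matrix.sub_vecMul]
  have h1 : Matrix.vecMul (fun i => (r2 i : ℝ)) M₀ - Matrix.vecMul (fun i => (r1 i : ℝ)) M₀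
      = u := by
    have : e + u - e = u := by funext j; simp
    rw [← this, hr2, hr1]; funext j; simp
  have h2 : Matrix.vecMul (fun i => (r3 i : ℝ)) M₀ - Matrix.vecMul (fun i => (r4 i : ℝ)) M₀
      = (c - d) - (b - a) := by
    rw [show Matrix.vecMul (fun i => (r3 i : ℝ)) M₀ = c - b by rw [hr3]; funext j; simp,
        show Matrix.vecMul (fun i => (r4 i : ℝ)) M₀ = d - a by rw [hr4]; funext j; simp]
    funext j; simp; ring
  funext j
  have e1 := congrFun h1 j
  have e2 := congrFun h2 j
  simp only [Pi.sub_apply, Pi.add_apply, hu] at e1 e2 ⊢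
  linarith


-- rotation matrices
noncomputable abbrev Rm : Matrix (Fin 2) (Fin 2) ℝ := !![0, -1; 1, 0]
noncomputable abbrev Ri : Matrix (Fin 2) (Fin 2) ℝ := !![0, 1; -1, 0]

lemma RmRi : Rm * Ri = 1 := by
  ext i j; fin_cases i <;> fin_cases j <;>
    simp [Matrix.mul_apply, Fin.sum_univ_two]
lemma RiRm : Ri * Rm = 1 := by
  ext i j; fin_cases i <;> fin_cases j <;>
    simp [Matrix.mul_apply, Fin.sum_univ_two]

lemma vecMul_Rm_Ri (x : Fin 2 → ℝ) : Matrix.vecMul (Matrix.vecMul x Rm) Ri = x := by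
  rw [Matrix.vecMul_vecMul, RmRi, Matrix.vecMul_one]
lemma vecMul_Ri_Rm (x : Fin 2 → ℝ) : Matrix.vecMul (Matrix.vecMul x Ri) Rm = x := by
  rw [Matrix.vecMul_vecMul, RiRm, Matrix.vecMul_one]

lemma mem_rotSet (S : Set (Fin 2 → ℝ)) (y : Fin 2 → ℝ) :
    y ∈ rotSet S ↔ Matrix.vecMul y Ri ∈ S := by
  constructor
  · rintro ⟨x, hx, rfl⟩; rwa [vecMul_Rm_Ri]
  · intro h; exact ⟨Matrix.vecMul y Ri, h, vecMul_Ri_Rm y⟩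

lemma vecMul_Ri_zero (y : Fin 2 → ℝ) : Matrix.vecMul y Ri 0 = -y 1 := by
  simp [Matrix.vecMul, dotProduct, Fin.sum_univ_two]

lemma mem_affLattice_rot (M : Matrix (Fin 2) (Fin 2) ℝ) (v : Fin 2 → ℝ) (y : Fin 2 → ℝ) :
    Matrix.vecMul y Ri ∈ affLattice M v ↔ y ∈ affLattice (M * Rm) (Matrix.vecMul v Rm) := by
  constructor
  · rintro ⟨m, hm⟩
    refine ⟨m, ?_⟩
    have := congrArg (fun x => Matrix.vecMul x Rm) hm
    rw [vecMul_Ri_Rm] at this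
    rw [this, Matrix.add_vecMul, Matrix.vecMul_vecMul]
  · rintro ⟨m, hm⟩
    refine ⟨m, ?_⟩
    rw [hm, Matrix.add_vecMul, Matrix.vecMul_vecMul, Matrix.vecMul_vecMul,
      Matrix.mul_assoc, RmRi, Matrix.mul_one, Matrix.vecMul_one]

lemma thetaA_eq (g : Matrix (Fin 2) (Fin 2) ℝ × (Fin 2 → ℝ)) :
    {x | ∃ m : Fin 2 → ℤ, x = aslAct g fun i => (m i : ℝ)} = affLattice g.1 g.2 := rfl

lemma thetaB_eq (g : Matrix (Fin 2) (Fin 2) ℝ × (Fin 2 → ℝ)) :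
    {x | ∃ m : Fin 2 → ℤ, x = -(aslAct g ((fun i => (m i : ℝ)) + wvec))}
      = affLattice g.1 (-(Matrix.vecMul wvec g.1) - g.2) := by
  ext x
  simp only [Set.mem_setOf_eq, affLattice, aslAct]
  constructor
  · rintro ⟨m, rfl⟩
    refine ⟨-m, ?_⟩
    have : (fun i => ((-m) i : ℝ)) = -(fun i => (m i : ℝ)) := by funext i; push_cast; simp
    rw [this, Matrix.neg_vecMul, Matrix.add_vecMul]
    funext j; simp; ring
  · rintro ⟨m, rfl⟩
    refine ⟨-m, ?_⟩
    have : (fun i => ((-m) i : ℝ)) = -(fun i => (m i : ℝ)) := by funext i; push_cast; simp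
    rw [this, Matrix.add_vecMul, Matrix.neg_vecMul]
    funext j; simp; ring

lemma rot_theta (g : Matrix (Fin 2) (Fin 2) ℝ × (Fin 2 → ℝ)) :
    rotSet (ThetaSet g) ∩ HplusOpen =
      ((affLattice (g.1 * Rm) (Matrix.vecMul g.2 Rm) ∩ {y | y 1 ≤ 0}) ∪
       (affLattice (g.1 * Rm) (Matrix.vecMul (-(Matrix.vecMul wvec g.1) - g.2) Rm)
          ∩ {y | 0 ≤ y 1})) ∩ HplusOpen := by
  ext y
  simp only [Set.mem_inter_iff, ThetaSet, thetaA_eq, thetaB_eq, mem_rotSet, Set.mem_union,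
    Set.mem_inter_iff, Hplus, Hminus, Set.mem_setOf_eq, vecMul_Ri_zero,
    mem_affLattice_rot, HplusOpen]
  constructor
  · rintro ⟨hmem | hmem, hy0⟩
    · exact ⟨Or.inl ⟨hmem.1, by linarith [hmem.2]⟩, hy0⟩
    · exact ⟨Or.inr ⟨hmem.1, by linarith [hmem.2]⟩, hy0⟩
  · rintro ⟨hmem | hmem, hy0⟩
    · exact ⟨Or.inl ⟨hmem.1, by linarith [hmem.2]⟩, hy0⟩
    · exact ⟨Or.inr ⟨hmem.1, by linarith [hmem.2]⟩, hy0⟩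


def castv (m : Fin 2 → ℤ) : Fin 2 → ℝ := fun i => (m i : ℝ)

lemma castv_add (p q : Fin 2 → ℤ) : castv (p + q) = castv p + castv q := by
  funext i; simp [castv]

lemma castv_sub (p q : Fin 2 → ℤ) : castv (p - q) = castv p - castv q := by
  funext i; simp [castv]

lemma castv_vecMul (m : Fin 2 → ℤ) (A : Matrix (Fin 2) (Fin 2) ℤ) :
    castv (Matrix.vecMul m A) = Matrix.vecMul (castv m) (A.map (Int.cast : ℤ → ℝ)) := by
  funext j
  simp [castv, Matrix.vecMul, dotProduct, Fin.sum_univ_two, Matrix.map_apply]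

def BadSet : Set (Matrix (Fin 2) (Fin 2) ℝ × (Fin 2 → ℝ)) :=
  {g | g.1.det = 1 ∧ ∃ m : Fin 2 → ℤ,
    Matrix.vecMul wvec g.1 + g.2 + g.2 = Matrix.vecMul (castv m) g.1}

lemma wvec_congr (γ₀ : Matrix (Fin 2) (Fin 2) ℤ)
    (h : γ₀.map (Int.cast : ℤ → ZMod 4) = 1 ∨ γ₀.map (Int.cast : ℤ → ZMod 4) = !![1, 2; 0, 1]) :
    ∃ z : Fin 2 → ℤ, Matrix.vecMul wvec (γ₀.map (Int.cast : ℤ → ℝ))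
      = wvec + castv z := by
  have e00 : ((γ₀ 0 0 : ℤ) : ZMod 4) = 1 := by
    rcases h with h | h <;> · have := congrFun (congrFun h 0) 0; simpa [Matrix.map_apply] using this
  have e10 : ((γ₀ 1 0 : ℤ) : ZMod 4) = 0 := by
    rcases h with h | h <;> · have := congrFun (congrFun h 1) 0; simpa [Matrix.map_apply, Matrix.one_apply] using this
  have e11 : ((γ₀ 1 1 : ℤ) : ZMod 4) = 1 := by
    rcases h with h | h <;> · have := congrFun (congrFun h 1) 1; simpa [Matrix.map_apply, Matrix.one_apply] using this
  have e01 : ((γ₀ 0 1 : ℤ) : ZMod 4) = 0 ∨ ((γ₀ 0 1 : ℤ) : ZMod 4) = 2 := by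
    rcases h with h | h
    · left; have := congrFun (congrFun h 0) 1; simpa [Matrix.map_apply, Matrix.one_apply] using this
    · right; have := congrFun (congrFun h 0) 1; simpa [Matrix.map_apply] using this
  have d00 : (4:ℤ) ∣ γ₀ 0 0 - 1 := by
    have : ((γ₀ 0 0 - 1 : ℤ) : ZMod 4) = 0 := by push_cast; rw [e00]; ring
    exact_mod_cast (ZMod.intCast_zmod_eq_zero_iff_dvd _ 4).mp this
  have d10 : (4:ℤ) ∣ γ₀ 1 0 := by
    exact_mod_cast (ZMod.intCast_zmod_eq_zero_iff_dvd _ 4).mp e10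
  have d11 : (4:ℤ) ∣ γ₀ 1 1 - 1 := by
    have : ((γ₀ 1 1 - 1 : ℤ) : ZMod 4) = 0 := by push_cast; rw [e11]; ring
    exact_mod_cast (ZMod.intCast_zmod_eq_zero_iff_dvd _ 4).mp this
  have d01 : (2:ℤ) ∣ γ₀ 0 1 := by
    rcases e01 with e | e
    · exact dvd_trans (by norm_num) ((ZMod.intCast_zmod_eq_zero_iff_dvd _ 4).mp e)
    · have : ((γ₀ 0 1 - 2 : ℤ) : ZMod 4) = 0 := by push_cast; rw [e]; ring
      have h4 := (ZMod.intCast_zmod_eq_zero_iff_dvd _ 4).mp this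
      obtain ⟨k, hk⟩ := h4
      exact ⟨2 * k + 1, by push_cast at hk ⊢; omega⟩
  obtain ⟨k00, hk00⟩ := d00
  obtain ⟨k10, hk10⟩ := d10
  obtain ⟨k11, hk11⟩ := d11
  obtain ⟨k01, hk01⟩ := d01
  refine ⟨![2 * k00 - k10, k01 - k11], ?_⟩
  have r00 : ((γ₀ 0 0 : ℤ) : ℝ) = 4 * (k00 : ℝ) + 1 := by exact_mod_cast congrArg (fun n : ℤ => (n : ℝ)) (by omega : γ₀ 0 0 = 4 * k00 + 1)
  have r10 : ((γ₀ 1 0 : ℤ) : ℝ) = 4 * (k10 : ℝ) := by exact_mod_cast congrArg (fun n : ℤ => (n : ℝ)) (by omega : γ₀ 1 0 = 4 * k10)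
  have r11 : ((γ₀ 1 1 : ℤ) : ℝ) = 4 * (k11 : ℝ) + 1 := by exact_mod_cast congrArg (fun n : ℤ => (n : ℝ)) (by omega : γ₀ 1 1 = 4 * k11 + 1)
  have r01 : ((γ₀ 0 1 : ℤ) : ℝ) = 2 * (k01 : ℝ) := by exact_mod_cast congrArg (fun n : ℤ => (n : ℝ)) (by omega : γ₀ 0 1 = 2 * k01)
  funext j
  fin_cases j <;>
    · simp [Matrix.vecMul, dotProduct, Fin.sum_univ_two, Matrix.map_apply, wvec, castv, Matrix.vecHead, Matrix.vecTail,
        r00, r10, r11, r01]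
      push_cast
      ring

lemma det_cast (γ₀ : Matrix (Fin 2) (Fin 2) ℤ) :
    (γ₀.map (Int.cast : ℤ → ℝ)).det = ((γ₀.det : ℤ) : ℝ) := by
  have := RingHom.map_det (Int.castRingHom ℝ) γ₀
  simp only [RingHom.mapMatrix_apply] at this
  simpa using this.symm

lemma badset_inv (γ : Matrix (Fin 2) (Fin 2) ℝ × (Fin 2 → ℝ)) (hγ : inLambda γ)
    (g : Matrix (Fin 2) (Fin 2) ℝ × (Fin 2 → ℝ)) :
    aslMul γ g ∈ BadSet ↔ g ∈ BadSet := by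
  obtain ⟨⟨γ₀, hγ1, hγdet, hγcong⟩, mv, hγ2⟩ := hγ
  obtain ⟨z, hz⟩ := wvec_congr γ₀ hγcong
  have hdet1 : γ.1.det = 1 := by rw [hγ1, det_cast, hγdet]; norm_num
  have hInv : Invertible γ₀ := γ₀.invertibleOfIsUnitDet (by rw [hγdet]; exact isUnit_one)
  set d : Fin 2 → ℤ := z + mv + mv with hd
  have hL : Matrix.vecMul wvec (aslMul γ g).1 + (aslMul γ g).2 + (aslMul γ g).2
      = (Matrix.vecMul wvec g.1 + g.2 + g.2) + Matrix.vecMul (castv d) g.1 := by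
    show Matrix.vecMul wvec (γ.1 * g.1) + (Matrix.vecMul γ.2 g.1 + g.2)
        + (Matrix.vecMul γ.2 g.1 + g.2) = _
    rw [← Matrix.vecMul_vecMul, hγ1, hz, (show γ.2 = castv mv from hγ2)]
    funext j
    simp only [hd, castv_add, Matrix.add_vecMul, Pi.add_apply, castv]
    ring
  have hdet_eq : (aslMul γ g).1.det = g.1.det := by
    show (γ.1 * g.1).det = _
    rw [Matrix.det_mul, hdet1, one_mul]
  constructor
  · rintro ⟨hd1, m, hm⟩
    refine ⟨by rwa [hdet_eq] at hd1, Matrix.vecMul m γ₀ - d, ?_⟩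
    rw [hL, (show (aslMul γ g).1 = γ.1 * g.1 from rfl)] at hm
    rw [castv_sub, castv_vecMul, Matrix.sub_vecMul, ← hγ1, Matrix.vecMul_vecMul, ← hm]
    funext j; simp
  · rintro ⟨hd1, m, hm⟩
    have hrec : Matrix.vecMul (Matrix.vecMul (m + d) (⅟γ₀)) γ₀ = m + d := by
      rw [Matrix.vecMul_vecMul, invOf_mul_self, Matrix.vecMul_one]
    refine ⟨by rwa [hdet_eq], Matrix.vecMul (m + d) (⅟γ₀), ?_⟩
    have hm1 : (aslMul γ g).1 = γ₀.map (Int.cast : ℤ → ℝ) * g.1 := by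
      show γ.1 * g.1 = _; rw [hγ1]
    rw [hL, hm, hm1, ← Matrix.vecMul_vecMul, ← castv_vecMul, hrec]
    funext j
    simp only [hd, castv_add, Matrix.add_vecMul, Pi.add_apply]


lemma key (g : Matrix (Fin 2) (Fin 2) ℝ × (Fin 2 → ℝ)) (hg : g.1.det = 1)
    (hIs : IsAffLatticeOnRight (rotSet (ThetaSet g))) : g ∈ BadSet := by
  obtain ⟨M, v, hM, heq⟩ := hIs
  rw [rot_theta] at heq
  have hdet0 : (g.1 * Rm).det ≠ 0 := by
    rw [Matrix.det_mul, hg, one_mul]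
    norm_num [Matrix.det_fin_two_of]
  obtain ⟨m, hm⟩ := lattice_diff M v (g.1 * Rm) (Matrix.vecMul g.2 Rm)
    (Matrix.vecMul (-(Matrix.vecMul wvec g.1) - g.2) Rm) hdet0 heq.symm
  refine ⟨hg, -m, ?_⟩
  have hm' : Matrix.vecMul (-(Matrix.vecMul wvec g.1) - g.2 - g.2) Rm
      = Matrix.vecMul (fun i => (m i : ℝ)) (g.1 * Rm) := by
    rw [Matrix.sub_vecMul]; exact hm
  have hfin := congrArg (fun x => Matrix.vecMul x Ri) hm'
  rw [vecMul_Rm_Ri, Matrix.vecMul_vecMul, Matrix.mul_assoc, RmRi, Matrix.mul_one] at hfin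
  have hc : castv (-m) = -(fun i => (m i : ℝ)) := by funext i; simp [castv]
  rw [hc, Matrix.neg_vecMul, ← hfin]
  funext j; simp only [Pi.neg_apply, Pi.sub_apply, Pi.add_apply]; ring


lemma measurable_entry (i j : Fin 2) :
    Measurable fun g : Matrix (Fin 2) (Fin 2) ℝ × (Fin 2 → ℝ) => g.1 i j := by
  have h1 : Measurable fun M : Fin 2 → Fin 2 → ℝ => M i j :=
    (measurable_pi_apply j).comp (measurable_pi_apply i)
  exact h1.comp measurable_fst

lemma measurable_snd_app (j : Fin 2) :
    Measurable fun g : Matrix (Fin 2) (Fin 2) ℝ × (Fin 2 → ℝ) => g.2 j :=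
  (measurable_pi_apply j).comp measurable_snd

lemma measurable_det1 :
    Measurable fun g : Matrix (Fin 2) (Fin 2) ℝ × (Fin 2 → ℝ) => g.1.det := by
  have h : (fun g : Matrix (Fin 2) (Fin 2) ℝ × (Fin 2 → ℝ) => g.1.det)
      = fun g => g.1 0 0 * g.1 1 1 - g.1 0 1 * g.1 1 0 := by
    funext g; exact Matrix.det_fin_two g.1
  rw [h]
  exact ((measurable_entry 0 0).mul (measurable_entry 1 1)).sub
    ((measurable_entry 0 1).mul (measurable_entry 1 0))

lemma measurable_vecMul_comp (w : Fin 2 → ℝ) (j : Fin 2) :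
    Measurable fun g : Matrix (Fin 2) (Fin 2) ℝ × (Fin 2 → ℝ) => Matrix.vecMul w g.1 j := by
  have h : (fun g : Matrix (Fin 2) (Fin 2) ℝ × (Fin 2 → ℝ) => Matrix.vecMul w g.1 j)
      = fun g => w 0 * g.1 0 j + w 1 * g.1 1 j := by
    funext g; simp [Matrix.vecMul, dotProduct, Fin.sum_univ_two]
  rw [h]
  exact (measurable_const.mul (measurable_entry 0 j)).add
    (measurable_const.mul (measurable_entry 1 j))

lemma measurableSet_badset : MeasurableSet BadSet := by
  have hrw : BadSet = {g | g.1.det = 1} ∩ ⋃ m : Fin 2 → ℤ,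
      ⋂ j : Fin 2, {g : Matrix (Fin 2) (Fin 2) ℝ × (Fin 2 → ℝ) |
        Matrix.vecMul wvec g.1 j + g.2 j + g.2 j = Matrix.vecMul (castv m) g.1 j} := by
    ext g
    simp only [BadSet, Set.mem_setOf_eq, Set.mem_inter_iff, Set.mem_iUnion, Set.mem_iInter]
    constructor
    · rintro ⟨h1, m, hm⟩
      exact ⟨h1, m, fun j => by rw [← congrFun hm j]; simp⟩
    · rintro ⟨h1, m, hm⟩
      refine ⟨h1, m, funext fun j => ?_⟩
      have := hm j; simpa using this
  rw [hrw]
  refine MeasurableSet.inter ?_ (MeasurableSet.iUnion fun m => MeasurableSet.iInter fun j => ?_)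
  · exact measurable_det1 (measurableSet_singleton 1)
  · exact measurableSet_eq_fun
      (((measurable_vecMul_comp wvec j).add (measurable_snd_app j)).add (measurable_snd_app j))
      (measurable_vecMul_comp (castv m) j)

lemma badset_null (μ : Measure (Matrix (Fin 2) (Fin 2) ℝ × (Fin 2 → ℝ)))
    [IsProbabilityMeasure μ]
    (hinv : ∀ h : Matrix (Fin 2) (Fin 2) ℝ × (Fin 2 → ℝ), h.1.det = 1 →
      ∀ F : Matrix (Fin 2) (Fin 2) ℝ × (Fin 2 → ℝ) → ℝ≥0∞, Measurable F →
        (∀ γ, inLambda γ → ∀ g, F (aslMul γ g) = F g) →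
        ∫⁻ g, F (aslMul g h) ∂μ = ∫⁻ g, F g ∂μ) :
    μ BadSet = 0 := by
  classical
  set F : Matrix (Fin 2) (Fin 2) ℝ × (Fin 2 → ℝ) → ℝ≥0∞
    := BadSet.indicator (fun _ => 1) with hF
  have hFmeas : Measurable F := measurable_const.indicator measurableSet_badset
  have hFinv : ∀ γ, inLambda γ → ∀ g, F (aslMul γ g) = F g := by
    intro γ hγ g
    by_cases hg : g ∈ BadSet
    · rw [hF, Set.indicator_of_mem ((badset_inv γ hγ g).mpr hg), Set.indicator_of_mem hg]
    · rw [hF, Set.indicator_of_notMem (fun hc => hg ((badset_inv γ hγ g).mp hc)),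
        Set.indicator_of_notMem hg]
  have hstep : ∀ t : Fin 2 → ℝ, ∫⁻ g, F (g.1, g.2 + t) ∂μ = μ BadSet := by
    intro t
    have h1 : ((1 : Matrix (Fin 2) (Fin 2) ℝ), t).1.det = 1 := by simp
    have hi := hinv (1, t) h1 F hFmeas hFinv
    have heq : ∀ g : Matrix (Fin 2) (Fin 2) ℝ × (Fin 2 → ℝ),
        aslMul g ((1 : Matrix (Fin 2) (Fin 2) ℝ), t) = (g.1, g.2 + t) := by
      intro g; simp [aslMul]
    calc ∫⁻ g, F (g.1, g.2 + t) ∂μ = ∫⁻ g, F (aslMul g (1, t)) ∂μ :=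
          lintegral_congr fun g => by rw [heq]
      _ = ∫⁻ g, F g ∂μ := hi
      _ = μ BadSet := by rw [hF, lintegral_indicator measurableSet_badset, setLIntegral_one]
  set box : Set (Fin 2 → ℝ) := Set.univ.pi fun _ => Set.Icc (0:ℝ) 1 with hbox
  have hboxm : MeasurableSet box := MeasurableSet.univ_pi fun _ => measurableSet_Icc
  set ν : Measure (Fin 2 → ℝ) := volume.restrict box with hν
  have hνuniv : ν Set.univ = 1 := by
    rw [hν, Measure.restrict_apply_univ, hbox, volume_pi_pi]
    simp
  have hG : Measurable fun p : (Matrix (Fin 2) (Fin 2) ℝ × (Fin 2 → ℝ)) × (Fin 2 → ℝ) =>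
      F (p.1.1, p.1.2 + p.2) :=
    hFmeas.comp ((measurable_fst.fst).prodMk ((measurable_fst.snd).add measurable_snd))
  have hswap := lintegral_lintegral_swap (μ := μ) (ν := ν)
    (f := fun g t => F (g.1, g.2 + t)) hG.aemeasurable
  have hinner : ∀ g : Matrix (Fin 2) (Fin 2) ℝ × (Fin 2 → ℝ),
      ∫⁻ t, F (g.1, g.2 + t) ∂ν = 0 := by
    intro g
    set c : (Fin 2 → ℤ) → (Fin 2 → ℝ) := fun m =>
      (2:ℝ)⁻¹ • (Matrix.vecMul (castv m) g.1 - Matrix.vecMul wvec g.1 - g.2 - g.2) with hc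
    have hsub : ∀ t, F (g.1, g.2 + t) ≠ 0 → t ∈ Set.range c := by
      intro t ht
      have hmem : (g.1, g.2 + t) ∈ BadSet := by
        by_contra hx; exact ht (Set.indicator_of_notMem hx _)
      obtain ⟨_, m, hm⟩ := hmem
      refine ⟨m, ?_⟩
      funext j
      have hmj := congrFun hm j
      simp only [Pi.add_apply] at hmj
      simp only [hc, Pi.smul_apply, Pi.sub_apply, smul_eq_mul]
      linarith
    have hnull : ν (Set.range c) = 0 := by
      have h0 : volume (Set.range c) = 0 := (Set.countable_range c).measure_zero _
      rw [hν, Measure.restrict_apply' hboxm]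
      exact measure_mono_null Set.inter_subset_left h0
    have hae : ∀ᵐ t ∂ν, F (g.1, g.2 + t) = 0 := by
      filter_upwards [measure_eq_zero_iff_ae_notMem.mp hnull] with t ht
      by_contra hx; exact ht (hsub t hx)
    calc ∫⁻ t, F (g.1, g.2 + t) ∂ν = ∫⁻ _t, 0 ∂ν := lintegral_congr_ae hae
      _ = 0 := lintegral_zero
  have hLHS : ∫⁻ g, ∫⁻ t, F (g.1, g.2 + t) ∂ν ∂μ = 0 := by
    calc ∫⁻ g, ∫⁻ t, F (g.1, g.2 + t) ∂ν ∂μ = ∫⁻ _g, 0 ∂μ := lintegral_congr hinner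
      _ = 0 := lintegral_zero
  have hRHS : ∫⁻ t, ∫⁻ g, F (g.1, g.2 + t) ∂μ ∂ν = μ BadSet := by
    calc ∫⁻ t, ∫⁻ g, F (g.1, g.2 + t) ∂μ ∂ν = ∫⁻ _t, μ BadSet ∂ν := lintegral_congr hstep
      _ = μ BadSet * ν Set.univ := lintegral_const _
      _ = μ BadSet := by rw [hνuniv, mul_one]
  rw [← hRHS, ← hswap]
  exact hLHS

/-- The rotated process `Θ·k(π/2)` does not have the same distribution as `Θ`, so `Θ` is
not `SL(2,ℝ)`-invariant: almost surely `Θ` restricted to the open right half plane is the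
restriction of a single affine lattice, whereas `Θ·((0,-1),(1,0))` restricted to the open
right half plane almost surely is not; in particular the probabilities of this event for
the two processes differ. -/
theorem stmt19 (μ : Measure (Matrix (Fin 2) (Fin 2) ℝ × (Fin 2 → ℝ)))
    [IsProbabilityMeasure μ] (hdet : ∀ᵐ g ∂μ, g.1.det = 1)
    (hinv : ∀ h : Matrix (Fin 2) (Fin 2) ℝ × (Fin 2 → ℝ), h.1.det = 1 →
      ∀ F : Matrix (Fin 2) (Fin 2) ℝ × (Fin 2 → ℝ) → ℝ≥0∞, Measurable F →
        (∀ γ, inLambda γ → ∀ g, F (aslMul γ g) = F g) →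
        ∫⁻ g, F (aslMul g h) ∂μ = ∫⁻ g, F g ∂μ) :
    (∀ g : Matrix (Fin 2) (Fin 2) ℝ × (Fin 2 → ℝ), g.1.det = 1 →
      IsAffLatticeOnRight (ThetaSet g)) ∧
    (∀ᵐ g ∂μ, ¬ IsAffLatticeOnRight (rotSet (ThetaSet g))) ∧
    ∫⁻ g, {g' | IsAffLatticeOnRight (ThetaSet g')}.indicator (fun _ => (1 : ℝ≥0∞)) g ∂μ
      ≠ ∫⁻ g, {g' | IsAffLatticeOnRight (rotSet (ThetaSet g'))}.indicator
          (fun _ => (1 : ℝ≥0∞)) g ∂μ := by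
  have part1 : ∀ g : Matrix (Fin 2) (Fin 2) ℝ × (Fin 2 → ℝ), g.1.det = 1 →
      IsAffLatticeOnRight (ThetaSet g) := by
    intro g hg
    refine ⟨g.1, g.2, by rw [hg]; exact one_ne_zero, ?_⟩
    ext x
    simp only [ThetaSet, thetaA_eq, Set.mem_inter_iff, Set.mem_union, HplusOpen, Hplus,
      Hminus, Set.mem_setOf_eq]
    constructor
    · rintro ⟨hA | hB, hx⟩
      · exact ⟨hA.1, hx⟩
      · exact absurd hx (not_lt.mpr hB.2)
    · rintro ⟨hL, hx⟩
      exact ⟨Or.inl ⟨hL, le_of_lt hx⟩, hx⟩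
  have hnull : μ BadSet = 0 := badset_null μ hinv
  have part2 : ∀ᵐ g ∂μ, ¬ IsAffLatticeOnRight (rotSet (ThetaSet g)) := by
    filter_upwards [hdet, measure_eq_zero_iff_ae_notMem.mp hnull] with g h1 hg2
    exact fun hIs => hg2 (key g h1 hIs)
  refine ⟨part1, part2, ?_⟩
  have hone : ∫⁻ g, {g' | IsAffLatticeOnRight (ThetaSet g')}.indicator
      (fun _ => (1 : ℝ≥0∞)) g ∂μ = 1 := by
    have hae : ∀ᵐ g ∂μ, {g' | IsAffLatticeOnRight (ThetaSet g')}.indicator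
        (fun _ => (1 : ℝ≥0∞)) g = 1 := by
      filter_upwards [hdet] with g h1
      have hmem : g ∈ {g' | IsAffLatticeOnRight (ThetaSet g')} := part1 g h1
      exact Set.indicator_of_mem hmem (fun _ => (1 : ℝ≥0∞))
    rw [lintegral_congr_ae hae, lintegral_one, measure_univ]
  have hzero : ∫⁻ g, {g' | IsAffLatticeOnRight (rotSet (ThetaSet g'))}.indicator
      (fun _ => (1 : ℝ≥0∞)) g ∂μ = 0 := by
    have hae : ∀ᵐ g ∂μ, {g' | IsAffLatticeOnRight (rotSet (ThetaSet g'))}.indicator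
        (fun _ => (1 : ℝ≥0∞)) g = 0 := by
      filter_upwards [part2] with g h1
      have hmem : g ∉ {g' | IsAffLatticeOnRight (rotSet (ThetaSet g'))} := h1
      exact Set.indicator_of_notMem hmem (fun _ => (1 : ℝ≥0∞))
    rw [lintegral_congr_ae hae, lintegral_zero]
  rw [hone, hzero]
  exact one_ne_zero
end
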